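/- ∫₀^1 (y/(1−y)³) · sech(πy/(2(1−y))) dy = 8G/π², where G is Catalan's constant. -/

import Mathlib

open MeasureTheory Set Real

lemma aux_xexp (c : ℝ) (hc : 0 < c) :
    ∫ x in Set.Ioi (0:ℝ), x * Real.exp (-(c*x)) = 1/c^2 := by
  have h := Real.integral_rpow_mul_exp_neg_mul_Ioi (a := 2) (r := c) two_pos hc
  rw [show (2:ℝ) - 1 = 1 by norm_num] at h
  simp_rw [Real.rpow_one] at h
  rw [h, Real.Gamma_two, mul_one, show (2:ℝ) = ((2:ℕ):ℝ) by norm_num,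
    Real.rpow_natCast]
  rw [one_div, inv_pow, one_div]

lemma aux_xexp_int (c : ℝ) (hc : 0 < c) :
    IntegrableOn (fun x => x * Real.exp (-(c*x))) (Set.Ioi (0:ℝ)) := by
  have := integrableOn_rpow_mul_exp_neg_mul_rpow (p := 1) (s := 1) (b := c)
    (by norm_num) zero_lt_one hc
  simpa [Real.rpow_one, neg_mul] using this

lemma aux_hassum (t : ℝ) (ht : 0 < t) :
    HasSum (fun k : ℕ => (-1:ℝ)^k * Real.exp (-((2*k+1)*t)))
      (1/(Real.exp t + Real.exp (-t))) := by
  have hr : ‖-(Real.exp (-(2*t)))‖ < 1 := by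
    rw [norm_neg, Real.norm_eq_abs, abs_of_pos (Real.exp_pos _)]
    exact Real.exp_lt_one_iff.mpr (by linarith)
  have hg := (hasSum_geometric_of_norm_lt_one hr).mul_left (Real.exp (-t))
  have hfun : (fun k : ℕ => Real.exp (-t) * (-(Real.exp (-(2*t))))^k)
      = fun k : ℕ => (-1:ℝ)^k * Real.exp (-((2*k+1)*t)) := by
    funext k
    rw [neg_pow, ← Real.exp_nat_mul, show -((2*(k:ℝ)+1)*t) = (k:ℝ)*(-(2*t)) + -t by ring,
      Real.exp_add]
    ring
  rw [hfun] at hg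
  convert hg using 1
  rfl
  have hu : Real.exp t ≠ 0 := (Real.exp_pos t).ne'
  rw [Real.exp_neg, show -(2*t) = -t + -t by ring, Real.exp_add, Real.exp_neg]
  field_simp
  rw [sub_neg_eq_add, div_self (by positivity)]

lemma aux_halfline :
    ∫ x in Set.Ioi (0:ℝ),
        x * (2 / (Real.exp (Real.pi * x / 2) + Real.exp (-(Real.pi * x / 2))))
      = 8 * (∑' k : ℕ, (-1 : ℝ) ^ k / (1 + 2 * (k : ℝ)) ^ 2) / Real.pi ^ 2 := by
  have hπ := Real.pi_pos
  set F : ℕ → ℝ → ℝ :=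
    fun k x => (-1:ℝ)^k * (2 * (x * Real.exp (-(((2*k+1)*Real.pi/2) * x)))) with hF
  have hc : ∀ k : ℕ, 0 < (2*(k:ℝ)+1)*Real.pi/2 := fun k => by positivity
  have hInt : ∀ k : ℕ, Integrable (F k) (volume.restrict (Set.Ioi (0:ℝ))) :=
    fun k => ((aux_xexp_int _ (hc k)).const_mul 2).const_mul ((-1:ℝ)^k)
  have hNormVal : ∀ k : ℕ,
      (∫ x, ‖F k x‖ ∂(volume.restrict (Set.Ioi (0:ℝ))))
        = 8/Real.pi^2 * (1/(2*(k:ℝ)+1)^2) := by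
    intro k
    have heq : Set.EqOn (fun x => ‖F k x‖)
        (fun x => 2 * (x * Real.exp (-(((2*(k:ℝ)+1)*Real.pi/2) * x)))) (Set.Ioi (0:ℝ)) := by
      intro x hx
      simp only [hF, norm_mul, norm_pow, norm_neg, norm_one, one_pow, one_mul,
        Real.norm_eq_abs]
      rw [abs_of_pos (Set.mem_Ioi.mp hx), abs_of_pos (Real.exp_pos _)]
      norm_num
    rw [setIntegral_congr_fun measurableSet_Ioi heq, MeasureTheory.integral_const_mul,
      aux_xexp _ (hc k)]
    have h1 : ((2*(k:ℝ)+1)*Real.pi/2) ≠ 0 := (hc k).ne'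
    have h2 : (2*(k:ℝ)+1) ≠ 0 := by positivity
    field_simp
    ring
  have hSum : Summable fun k : ℕ => ∫ x, ‖F k x‖ ∂(volume.restrict (Set.Ioi (0:ℝ))) := by
    simp_rw [hNormVal]
    apply Summable.mul_left
    have hbase : Summable (fun k : ℕ => 1/((k:ℝ)+1)^2) := by
      have := Real.summable_one_div_nat_pow.mpr (one_lt_two)
      exact_mod_cast (summable_nat_add_iff 1).mpr this
    apply Summable.of_nonneg_of_le (fun k => by positivity) (fun k => ?_) hbase
    have hk : (0:ℝ) ≤ (k:ℝ) := Nat.cast_nonneg k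
    apply one_div_le_one_div_of_le (by positivity)
    nlinarith
  have key := MeasureTheory.integral_tsum_of_summable_integral_norm hInt hSum
  have hptwise : Set.EqOn (fun x => ∑' k, F k x)
      (fun x => x * (2 / (Real.exp (Real.pi * x / 2) + Real.exp (-(Real.pi * x / 2)))))
      (Set.Ioi (0:ℝ)) := by
    intro x hx
    have ht : 0 < Real.pi * x / 2 := by
      have : (0:ℝ) < x := hx
      positivity
    have hs := (aux_hassum _ ht).mul_left (2*x)
    have hfun : (fun k : ℕ => 2*x*((-1:ℝ)^k * Real.exp (-((2*(k:ℝ)+1)*(Real.pi*x/2)))))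
        = fun k => F k x := by
      funext k
      rw [show ((2*(k:ℝ)+1)*(Real.pi*x/2)) = ((2*(k:ℝ)+1)*Real.pi/2)*x by ring]
      simp only [hF]; ring
    rw [hfun] at hs
    show (∑' k, F k x) = x * (2 / (Real.exp (Real.pi * x / 2) + Real.exp (-(Real.pi * x / 2))))
    rw [hs.tsum_eq]
    ring
  have hIntVal : ∀ k : ℕ,
      (∫ x, F k x ∂(volume.restrict (Set.Ioi (0:ℝ))))
        = 8/Real.pi^2 * ((-1:ℝ)^k / (1+2*(k:ℝ))^2) := by
    intro k
    simp only [hF]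
    rw [MeasureTheory.integral_const_mul, MeasureTheory.integral_const_mul,
      aux_xexp _ (hc k)]
    have h2 : (2*(k:ℝ)+1) ≠ 0 := by positivity
    field_simp
    ring
  calc ∫ x in Set.Ioi (0:ℝ),
        x * (2 / (Real.exp (Real.pi * x / 2) + Real.exp (-(Real.pi * x / 2))))
      = ∫ x in Set.Ioi (0:ℝ), ∑' k, F k x :=
        (setIntegral_congr_fun measurableSet_Ioi hptwise).symm
    _ = ∑' k, ∫ x, F k x ∂(volume.restrict (Set.Ioi (0:ℝ))) := key.symm
    _ = ∑' k : ℕ, 8/Real.pi^2 * ((-1:ℝ)^k / (1+2*(k:ℝ))^2) := by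
        exact tsum_congr hIntVal
    _ = 8 * (∑' k : ℕ, (-1 : ℝ) ^ k / (1 + 2 * (k : ℝ)) ^ 2) / Real.pi ^ 2 := by
        rw [tsum_mul_left]; ring

theorem ratio_change_of_variable :
    ∫ y in (0:ℝ)..1,
        (y / (1 - y) ^ 3) *
          (2 / (Real.exp (Real.pi * y / (2 * (1 - y))) + Real.exp (-(Real.pi * y / (2 * (1 - y))))))
      = 8 * (∑' k : ℕ, (-1 : ℝ) ^ k / (1 + 2 * (k : ℝ)) ^ 2) / Real.pi ^ 2 := by
  set g : ℝ → ℝ :=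
    fun x => x * (2 / (Real.exp (Real.pi * x / 2) + Real.exp (-(Real.pi * x / 2)))) with hg
  set f : ℝ → ℝ := fun y => y / (1 - y) with hf
  have hderiv : ∀ y ∈ Set.Ioo (0:ℝ) 1, HasDerivWithinAt f (1/(1-y)^2) (Set.Ioo (0:ℝ) 1) y := by
    intro y hy
    have hne : (1:ℝ) - y ≠ 0 := by have := hy.2; intro h; linarith [sub_eq_zero.mp h]
    have h := (hasDerivAt_id y).div ((hasDerivAt_const y (1:ℝ)).sub (hasDerivAt_id y)) hne
    simp only [id_eq, Pi.sub_apply] at h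
    have hval : (1*(1-y) - y*(0-1))/(1-y)^2 = 1/(1-y)^2 := by ring
    rw [hval] at h
    exact h.hasDerivWithinAt
  have hinj : Set.InjOn f (Set.Ioo (0:ℝ) 1) := by
    intro a ha b hb hab
    have h1 : (1:ℝ) - a ≠ 0 := by have := ha.2; intro h; linarith [sub_eq_zero.mp h]
    have h2 : (1:ℝ) - b ≠ 0 := by have := hb.2; intro h; linarith [sub_eq_zero.mp h]
    simp only [hf] at hab
    field_simp at hab
    nlinarith [hab]
  have himg : f '' Set.Ioo (0:ℝ) 1 = Set.Ioi (0:ℝ) := by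
    ext x
    constructor
    · rintro ⟨y, hy, rfl⟩
      exact div_pos hy.1 (by linarith [hy.2])
    · intro hx
      have hx' : (0:ℝ) < x := hx
      refine ⟨x/(1+x), ⟨div_pos hx' (by linarith), (div_lt_one (by linarith)).mpr (by linarith)⟩, ?_⟩
      simp only [hf]
      rw [show (1:ℝ) - x/(1+x) = 1/(1+x) by field_simp; ring]
      field_simp
  have hcv := integral_image_eq_integral_abs_deriv_smul measurableSet_Ioo hderiv hinj g
  rw [himg] at hcv
  rw [intervalIntegral.integral_of_le zero_le_one, MeasureTheory.integral_Ioc_eq_integral_Ioo]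
  have hcongr : Set.EqOn
      (fun y => (y / (1 - y) ^ 3) *
          (2 / (Real.exp (Real.pi * y / (2 * (1 - y))) + Real.exp (-(Real.pi * y / (2 * (1 - y)))))))
      (fun y => |1/(1-y)^2| • g (f y)) (Set.Ioo (0:ℝ) 1) := by
    intro y hy
    have hpos : (0:ℝ) < 1 - y := by linarith [hy.2]
    have hne : (1:ℝ) - y ≠ 0 := hpos.ne'
    simp only [hg, hf, smul_eq_mul]
    rw [abs_of_pos (by positivity)]
    have harg : Real.pi * (y/(1-y)) / 2 = Real.pi * y / (2*(1-y)) := by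
      rw [mul_div_assoc', div_div, mul_comm (1-y) 2]
    rw [harg]
    field_simp
  rw [setIntegral_congr_fun measurableSet_Ioo hcongr, ← hcv]
  exact aux_halfline
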